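/- arXiv:0803.2100 — 2 statements merged into one kernel-verified Lean document; each statement's English description precedes it below -/
import Mathlib

section
/- Under the conditions min_{i} π_i ≥ π*_N > 0 with N·π*_N → ∞, the existence of κ ≥ 0 with N^{1/2+κ}(π*_N)^2 → ∞ and max_i ∑_{j≠i} (π_{ij} − π_i π_j)^2 = O(N^{−2κ}), and limsup_N N^{−1}∑_{i∈U_N} y_i^2 < ∞, the Horvitz–Thompson estimator ȳ_π = N^{−1}∑_{i∈U_N} y_i 1_{i∈s}/π_i satisfies E[(ȳ_π − ȳ_N)^2] → 0 as N → ∞. -/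
open MeasureTheory Finset Filter

lemma key_integral {Ω : Type*} [MeasurableSpace Ω] (μ : Measure Ω) [IsProbabilityMeasure μ]
    (s : Ω → Finset ℕ) (hmeas : ∀ i j : ℕ, MeasurableSet {ω | i ∈ s ω ∧ j ∈ s ω})
    (N : ℕ) (c : ℕ → ℝ) :
    ∫ ω, (∑ i ∈ range N, c i * ((if i ∈ s ω then (1:ℝ) else 0) - (μ {ω | i ∈ s ω}).toReal)) ^ 2 ∂μ
      = ∑ i ∈ range N, ∑ j ∈ range N, c i * c j *
          ((μ {ω | i ∈ s ω ∧ j ∈ s ω}).toReal -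
            (μ {ω | i ∈ s ω}).toReal * (μ {ω | j ∈ s ω}).toReal) := by
  have hA : ∀ i : ℕ, MeasurableSet {ω | i ∈ s ω} := by
    intro i; simpa using hmeas i i
  set X : ℕ → Ω → ℝ := fun i ω => if i ∈ s ω then (1:ℝ) else 0 with hX
  have hXind : ∀ i, X i = Set.indicator {ω | i ∈ s ω} (fun _ => (1:ℝ)) := by
    intro i; funext ω; simp only [X, Set.indicator_apply, Set.mem_setOf_eq]
  have hXXind : ∀ i j, (fun ω => X i ω * X j ω)
      = Set.indicator {ω | i ∈ s ω ∧ j ∈ s ω} (fun _ => (1:ℝ)) := by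
    intro i j; funext ω
    by_cases hi : i ∈ s ω <;> by_cases hj : j ∈ s ω <;>
      simp [X, Set.indicator_apply, hi, hj, Set.mem_setOf_eq]
  have hXint : ∀ i, Integrable (X i) μ := by
    intro i; rw [hXind i]; exact (integrable_const 1).indicator (hA i)
  have hXXint : ∀ i j, Integrable (fun ω => X i ω * X j ω) μ := by
    intro i j; rw [hXXind i j]; exact (integrable_const 1).indicator (hmeas i j)
  have hXmean : ∀ i, ∫ ω, X i ω ∂μ = (μ {ω | i ∈ s ω}).toReal := by
    intro i; rw [hXind i, integral_indicator_const _ (hA i)]; simp; rfl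
  have hXXmean : ∀ i j, ∫ ω, X i ω * X j ω ∂μ = (μ {ω | i ∈ s ω ∧ j ∈ s ω}).toReal := by
    intro i j; rw [hXXind i j, integral_indicator_const _ (hmeas i j)]; simp; rfl
  set m : ℕ → ℝ := fun i => (μ {ω | i ∈ s ω}).toReal with hm
  have hterm_eq : ∀ i j, (fun ω => (c i * (X i ω - m i)) * (c j * (X j ω - m j)))
      = fun ω => (c i * c j) * (X i ω * X j ω) - (c i * c j * m j) * X i ω
          - (c i * c j * m i) * X j ω + (c i * c j * m i * m j) := by
    intro i j; funext ω; ring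
  have hterm_int : ∀ i j, Integrable (fun ω => (c i * (X i ω - m i)) * (c j * (X j ω - m j))) μ := by
    intro i j; rw [hterm_eq i j]
    exact ((((hXXint i j).const_mul _).sub ((hXint i).const_mul _)).sub
      ((hXint j).const_mul _)).add (integrable_const _)
  have hterm_val : ∀ i j, ∫ ω, (c i * (X i ω - m i)) * (c j * (X j ω - m j)) ∂μ
      = c i * c j * ((μ {ω | i ∈ s ω ∧ j ∈ s ω}).toReal - m i * m j) := by
    intro i j
    rw [hterm_eq i j]
    have I1 : Integrable (fun ω => (c i * c j) * (X i ω * X j ω)) μ := (hXXint i j).const_mul _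
    have I2 : Integrable (fun ω => (c i * c j * m j) * X i ω) μ := (hXint i).const_mul _
    have I3 : Integrable (fun ω => (c i * c j * m i) * X j ω) μ := (hXint j).const_mul _
    have I12 : Integrable (fun ω => (c i * c j) * (X i ω * X j ω) - (c i * c j * m j) * X i ω) μ :=
      I1.sub I2
    have I123 : Integrable (fun ω => (c i * c j) * (X i ω * X j ω) - (c i * c j * m j) * X i ω
        - (c i * c j * m i) * X j ω) μ := I12.sub I3
    rw [integral_add I123 (integrable_const _), integral_sub I12 I3, integral_sub I1 I2,
      integral_const_mul, integral_const_mul, integral_const_mul,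
      hXXmean, hXmean, hXmean, integral_const]
    simp only [probReal_univ, smul_eq_mul, one_mul, mul_one]
    ring
  have hsq : ∀ ω, (∑ i ∈ range N, c i * (X i ω - m i)) ^ 2
      = ∑ i ∈ range N, ∑ j ∈ range N, (c i * (X i ω - m i)) * (c j * (X j ω - m j)) := by
    intro ω; rw [sq, Finset.sum_mul_sum]
  calc ∫ ω, (∑ i ∈ range N, c i * (X i ω - m i)) ^ 2 ∂μ
      = ∫ ω, ∑ i ∈ range N, ∑ j ∈ range N,
          (c i * (X i ω - m i)) * (c j * (X j ω - m j)) ∂μ := by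
        congr 1; funext ω; exact hsq ω
    _ = ∑ i ∈ range N, ∫ ω, ∑ j ∈ range N,
          (c i * (X i ω - m i)) * (c j * (X j ω - m j)) ∂μ := by
        exact integral_finset_sum _ (fun i _ => integrable_finset_sum _ (fun j _ => hterm_int i j))
    _ = ∑ i ∈ range N, ∑ j ∈ range N, c i * c j *
          ((μ {ω | i ∈ s ω ∧ j ∈ s ω}).toReal - m i * m j) := by
        refine Finset.sum_congr rfl (fun i _ => ?_)
        rw [integral_finset_sum _ (fun j _ => hterm_int i j)]
        exact Finset.sum_congr rfl (fun j _ => hterm_val i j)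

lemma bound_sum (N : ℕ) (hN : 1 ≤ N) (κ : ℝ) (y π : ℕ → ℝ) (Δ : ℕ → ℕ → ℝ)
    (πstar B C : ℝ) (hπstar : 0 < πstar) (hB : 0 ≤ B) (hC : 0 ≤ C)
    (hπ_lb : ∀ i ∈ range N, πstar ≤ π i)
    (hdiag0 : ∀ i ∈ range N, 0 ≤ Δ i i) (hdiag1 : ∀ i ∈ range N, Δ i i ≤ π i)
    (hΔ : ∀ i ∈ range N, ∑ j ∈ (range N).erase i, (Δ i j) ^ 2 ≤ C * (N : ℝ) ^ (-(2 * κ)))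
    (hy2 : ∑ i ∈ range N, (y i) ^ 2 ≤ B * N) :
    ∑ i ∈ range N, ∑ j ∈ range N,
        ((N : ℝ)⁻¹ * (y i / π i)) * ((N : ℝ)⁻¹ * (y j / π j)) * Δ i j
      ≤ B / ((N : ℝ) * πstar) + B * Real.sqrt C / ((N : ℝ) ^ ((1 : ℝ) / 2 + κ) * πstar ^ 2) := by
  have hN0 : (0 : ℝ) < (N : ℝ) := by exact_mod_cast hN
  set c : ℕ → ℝ := fun i => (N : ℝ)⁻¹ * (y i / π i) with hc
  have hπpos : ∀ i ∈ range N, 0 < π i := fun i hi => lt_of_lt_of_le hπstar (hπ_lb i hi)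
  -- elementary bounds on c
  have hcabs : ∀ i ∈ range N, |c i| ≤ (N : ℝ)⁻¹ * (|y i| / πstar) := by
    intro i hi
    have h1 : |c i| = (N : ℝ)⁻¹ * (|y i| / π i) := by
      rw [hc]; rw [abs_mul, abs_div, abs_of_nonneg (by positivity : (0:ℝ) ≤ (N:ℝ)⁻¹),
        abs_of_pos (hπpos i hi)]
    rw [h1]
    have := div_le_div_of_nonneg_left (abs_nonneg (y i)) hπstar (hπ_lb i hi)
    exact mul_le_mul_of_nonneg_left this (by positivity)
  have hcsq : ∀ i ∈ range N, (c i) ^ 2 ≤ (N : ℝ)⁻¹ * (N : ℝ)⁻¹ * (y i ^ 2 / πstar ^ 2) := by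
    intro i hi
    have h1 : (c i) ^ 2 = (N : ℝ)⁻¹ * (N : ℝ)⁻¹ * (y i ^ 2 / π i ^ 2) := by rw [hc]; ring
    rw [h1]
    have h2 : y i ^ 2 / π i ^ 2 ≤ y i ^ 2 / πstar ^ 2 :=
      div_le_div_of_nonneg_left (sq_nonneg _) (by positivity)
        (pow_le_pow_left₀ hπstar.le (hπ_lb i hi) 2)
    exact mul_le_mul_of_nonneg_left h2 (by positivity)
  -- split the double sum into diagonal and off-diagonal parts
  have hsplit : ∑ i ∈ range N, ∑ j ∈ range N, c i * c j * Δ i j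
      = (∑ i ∈ range N, c i * c i * Δ i i)
        + ∑ i ∈ range N, ∑ j ∈ (range N).erase i, c i * c j * Δ i j := by
    rw [← Finset.sum_add_distrib]
    exact Finset.sum_congr rfl fun i hi =>
      (Finset.add_sum_erase _ (fun j => c i * c j * Δ i j) hi).symm
  -- diagonal bound
  have hdiag : ∑ i ∈ range N, c i * c i * Δ i i ≤ B / ((N : ℝ) * πstar) := by
    have step : ∀ i ∈ range N, c i * c i * Δ i i
        ≤ (N : ℝ)⁻¹ * (N : ℝ)⁻¹ * πstar⁻¹ * y i ^ 2 := by
      intro i hi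
      have hpi := hπpos i hi
      have e1 : c i * c i * Δ i i = (N : ℝ)⁻¹ * (N : ℝ)⁻¹ * (y i ^ 2 / π i ^ 2) * Δ i i := by
        rw [hc]; ring
      have e2 : (N : ℝ)⁻¹ * (N : ℝ)⁻¹ * (y i ^ 2 / π i ^ 2) * Δ i i
          ≤ (N : ℝ)⁻¹ * (N : ℝ)⁻¹ * (y i ^ 2 / π i ^ 2) * π i :=
        mul_le_mul_of_nonneg_left (hdiag1 i hi) (by positivity)
      have e3 : (N : ℝ)⁻¹ * (N : ℝ)⁻¹ * (y i ^ 2 / π i ^ 2) * π i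
          = (N : ℝ)⁻¹ * (N : ℝ)⁻¹ * (y i ^ 2 / π i) := by
        field_simp
      have e4 : y i ^ 2 / π i ≤ y i ^ 2 / πstar :=
        div_le_div_of_nonneg_left (sq_nonneg _) hπstar (hπ_lb i hi)
      calc c i * c i * Δ i i ≤ (N : ℝ)⁻¹ * (N : ℝ)⁻¹ * (y i ^ 2 / π i) := by
            rw [e1]; rw [← e3] at *; exact e2
        _ ≤ (N : ℝ)⁻¹ * (N : ℝ)⁻¹ * (y i ^ 2 / πstar) :=
            mul_le_mul_of_nonneg_left e4 (by positivity)
        _ = (N : ℝ)⁻¹ * (N : ℝ)⁻¹ * πstar⁻¹ * y i ^ 2 := by ring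
    calc ∑ i ∈ range N, c i * c i * Δ i i
        ≤ ∑ i ∈ range N, (N : ℝ)⁻¹ * (N : ℝ)⁻¹ * πstar⁻¹ * y i ^ 2 :=
          Finset.sum_le_sum step
      _ = (N : ℝ)⁻¹ * (N : ℝ)⁻¹ * πstar⁻¹ * ∑ i ∈ range N, y i ^ 2 := by
          rw [Finset.mul_sum]
      _ ≤ (N : ℝ)⁻¹ * (N : ℝ)⁻¹ * πstar⁻¹ * (B * N) :=
          mul_le_mul_of_nonneg_left hy2 (by positivity)
      _ = B / ((N : ℝ) * πstar) := by field_simp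
  -- off-diagonal bound
  set K : ℝ := Real.sqrt B / (Real.sqrt N * πstar) with hK
  set L : ℝ := Real.sqrt C * (N : ℝ) ^ (-κ) with hL
  have hK0 : 0 ≤ K := by positivity
  have hL0 : 0 ≤ L := by positivity
  have hKsq : K ^ 2 = B / ((N : ℝ) * πstar ^ 2) := by
    rw [hK, div_pow, mul_pow, Real.sq_sqrt hB, Real.sq_sqrt hN0.le]
  have hLsq : L ^ 2 = C * (N : ℝ) ^ (-(2 * κ)) := by
    rw [hL, mul_pow, Real.sq_sqrt hC]
    congr 1
    rw [← Real.rpow_natCast ((N:ℝ) ^ (-κ)) 2, ← Real.rpow_mul hN0.le]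
    norm_num
    ring_nf
  -- sum of c squared over any subset of range N
  have hcsum : ∀ i ∈ range N, ∑ j ∈ (range N).erase i, (c j) ^ 2 ≤ K ^ 2 := by
    intro i hi
    calc ∑ j ∈ (range N).erase i, (c j) ^ 2 ≤ ∑ j ∈ range N, (c j) ^ 2 :=
          Finset.sum_le_sum_of_subset_of_nonneg (Finset.erase_subset _ _)
            (fun j _ _ => sq_nonneg _)
      _ ≤ ∑ j ∈ range N, (N : ℝ)⁻¹ * (N : ℝ)⁻¹ * (y j ^ 2 / πstar ^ 2) :=
          Finset.sum_le_sum hcsq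
      _ = (N : ℝ)⁻¹ * (N : ℝ)⁻¹ * πstar⁻¹ ^ 2 * ∑ j ∈ range N, y j ^ 2 := by
          rw [Finset.mul_sum]; exact Finset.sum_congr rfl fun j _ => by ring
      _ ≤ (N : ℝ)⁻¹ * (N : ℝ)⁻¹ * πstar⁻¹ ^ 2 * (B * N) :=
          mul_le_mul_of_nonneg_left hy2 (by positivity)
      _ = B / ((N : ℝ) * πstar ^ 2) := by field_simp
      _ = K ^ 2 := hKsq.symm
  -- Cauchy–Schwarz per row
  have hrow : ∀ i ∈ range N, ∑ j ∈ (range N).erase i, c i * c j * Δ i j ≤ |c i| * (K * L) := by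
    intro i hi
    have h1 : ∑ j ∈ (range N).erase i, c i * c j * Δ i j
        ≤ ∑ j ∈ (range N).erase i, |c i| * (|c j| * |Δ i j|) := by
      refine Finset.sum_le_sum fun j _ => ?_
      calc c i * c j * Δ i j ≤ |c i * c j * Δ i j| := le_abs_self _
        _ = |c i| * (|c j| * |Δ i j|) := by rw [abs_mul, abs_mul]; ring
    have h2 : ∑ j ∈ (range N).erase i, |c j| * |Δ i j| ≤ K * L := by
      have cs := Real.sum_mul_le_sqrt_mul_sqrt ((range N).erase i)
        (fun j => |c j|) (fun j => |Δ i j|)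
      have e1 : ∑ j ∈ (range N).erase i, |c j| ^ 2 = ∑ j ∈ (range N).erase i, (c j) ^ 2 := by
        exact Finset.sum_congr rfl fun j _ => sq_abs _
      have e2 : ∑ j ∈ (range N).erase i, |Δ i j| ^ 2
          = ∑ j ∈ (range N).erase i, (Δ i j) ^ 2 := by
        exact Finset.sum_congr rfl fun j _ => sq_abs _
      calc ∑ j ∈ (range N).erase i, |c j| * |Δ i j|
          ≤ Real.sqrt (∑ j ∈ (range N).erase i, |c j| ^ 2)
            * Real.sqrt (∑ j ∈ (range N).erase i, |Δ i j| ^ 2) := cs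
        _ ≤ Real.sqrt (K ^ 2) * Real.sqrt (L ^ 2) := by
            rw [e1, e2]
            exact mul_le_mul (Real.sqrt_le_sqrt (hcsum i hi))
              (Real.sqrt_le_sqrt ((hΔ i hi).trans hLsq.ge)) (Real.sqrt_nonneg _)
              (Real.sqrt_nonneg _)
        _ = K * L := by rw [Real.sqrt_sq hK0, Real.sqrt_sq hL0]
    calc ∑ j ∈ (range N).erase i, c i * c j * Δ i j
        ≤ ∑ j ∈ (range N).erase i, |c i| * (|c j| * |Δ i j|) := h1
      _ = |c i| * ∑ j ∈ (range N).erase i, |c j| * |Δ i j| := by rw [Finset.mul_sum]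
      _ ≤ |c i| * (K * L) := mul_le_mul_of_nonneg_left h2 (abs_nonneg _)
  -- sum of |c i|
  have habs_sum : ∑ i ∈ range N, |c i| ≤ Real.sqrt B / πstar := by
    have h1 : ∑ i ∈ range N, |y i| ≤ Real.sqrt N * Real.sqrt (B * N) := by
      have cs := Real.sum_mul_le_sqrt_mul_sqrt (range N) (fun _ => (1:ℝ)) (fun i => |y i|)
      simp only [one_mul, one_pow, sq_abs] at cs
      calc ∑ i ∈ range N, |y i|
          ≤ Real.sqrt (∑ _i ∈ range N, (1:ℝ)) * Real.sqrt (∑ i ∈ range N, y i ^ 2) := cs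
        _ ≤ Real.sqrt N * Real.sqrt (B * N) := by
            rw [Finset.sum_const, card_range, nsmul_eq_mul, mul_one]
            exact mul_le_mul_of_nonneg_left (Real.sqrt_le_sqrt hy2) (Real.sqrt_nonneg _)
    calc ∑ i ∈ range N, |c i| ≤ ∑ i ∈ range N, (N : ℝ)⁻¹ * (|y i| / πstar) :=
          Finset.sum_le_sum hcabs
      _ = (N : ℝ)⁻¹ * πstar⁻¹ * ∑ i ∈ range N, |y i| := by
          rw [Finset.mul_sum]; exact Finset.sum_congr rfl fun i _ => by ring
      _ ≤ (N : ℝ)⁻¹ * πstar⁻¹ * (Real.sqrt N * Real.sqrt (B * N)) :=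
          mul_le_mul_of_nonneg_left h1 (by positivity)
      _ = Real.sqrt B / πstar := by
          rw [Real.sqrt_mul hB]
          have hs := Real.mul_self_sqrt hN0.le
          have hN0' : (N : ℝ) ≠ 0 := hN0.ne'
          calc (N:ℝ)⁻¹ * πstar⁻¹ * (Real.sqrt N * (Real.sqrt B * Real.sqrt N))
              = (N:ℝ)⁻¹ * πstar⁻¹ * Real.sqrt B * (Real.sqrt N * Real.sqrt N) := by ring
            _ = Real.sqrt B / πstar := by rw [hs]; field_simp
  -- combine off-diagonal
  have hoff : ∑ i ∈ range N, ∑ j ∈ (range N).erase i, c i * c j * Δ i j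
      ≤ B * Real.sqrt C / ((N : ℝ) ^ ((1 : ℝ) / 2 + κ) * πstar ^ 2) := by
    have h1 : ∑ i ∈ range N, ∑ j ∈ (range N).erase i, c i * c j * Δ i j
        ≤ (∑ i ∈ range N, |c i|) * (K * L) := by
      rw [Finset.sum_mul]
      exact Finset.sum_le_sum hrow
    have h2 : (∑ i ∈ range N, |c i|) * (K * L) ≤ (Real.sqrt B / πstar) * (K * L) :=
      mul_le_mul_of_nonneg_right habs_sum (by positivity)
    have h3 : (Real.sqrt B / πstar) * (K * L)
        = B * Real.sqrt C / ((N : ℝ) ^ ((1 : ℝ) / 2 + κ) * πstar ^ 2) := by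
      have e : (N : ℝ) ^ ((1 : ℝ) / 2 + κ) = Real.sqrt N * (N : ℝ) ^ κ := by
        rw [Real.rpow_add hN0, Real.sqrt_eq_rpow]
      rw [hK, hL, e, Real.rpow_neg hN0.le]
      have hsN : Real.sqrt N ≠ 0 := by positivity
      have hNκ : (N : ℝ) ^ κ ≠ 0 := by positivity
      rw [← Real.mul_self_sqrt hB, mul_assoc (Real.sqrt B)]
      field_simp
      rw [Real.sqrt_sq (Real.sqrt_nonneg B)]
    exact h1.trans (h2.trans_eq h3)
  calc ∑ i ∈ range N, ∑ j ∈ range N, c i * c j * Δ i j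
      = (∑ i ∈ range N, c i * c i * Δ i i)
        + ∑ i ∈ range N, ∑ j ∈ (range N).erase i, c i * c j * Δ i j := hsplit
    _ ≤ B / ((N : ℝ) * πstar) + B * Real.sqrt C / ((N : ℝ) ^ ((1 : ℝ) / 2 + κ) * πstar ^ 2) :=
        add_le_add hdiag hoff

/-- Lemma A.1: mean square consistency of the Horvitz–Thompson estimator
under design conditions D4 and D5. -/
theorem stmt_0 {Ω : Type*} [MeasurableSpace Ω] (μ : Measure Ω) [IsProbabilityMeasure μ]
    (s : ℕ → Ω → Finset ℕ)
    (hmeas : ∀ N i j : ℕ, MeasurableSet {ω | i ∈ s N ω ∧ j ∈ s N ω})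
    (y : ℕ → ℕ → ℝ) (π : ℕ → ℕ → ℝ) (πij : ℕ → ℕ → ℕ → ℝ)
    (hπ : ∀ N i, π N i = (μ {ω | i ∈ s N ω}).toReal)
    (hπij : ∀ N i j, πij N i j = (μ {ω | i ∈ s N ω ∧ j ∈ s N ω}).toReal)
    -- D4, first part: π_i ≥ π*_N > 0 and N π*_N → ∞
    (πstar : ℕ → ℝ) (hπstar_pos : ∀ N, 0 < πstar N)
    (hπ_lb : ∀ N, ∀ i ∈ range N, πstar N ≤ π N i)
    (hNπstar : Tendsto (fun N : ℕ => (N : ℝ) * πstar N) atTop atTop)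
    -- D4, second part: ∃ κ ≥ 0 with N^{1/2+κ} (π*_N)² → ∞ and
    -- max_i ∑_{j ≠ i} Δ_{ij}² = O(N^{-2κ})
    (κ : ℝ) (hκ : 0 ≤ κ)
    (hrate : Tendsto (fun N : ℕ => (N : ℝ) ^ ((1 : ℝ) / 2 + κ) * (πstar N) ^ 2)
      atTop atTop)
    (hΔ : ∃ C : ℝ, ∀ᶠ N : ℕ in atTop, ∀ i ∈ range N,
      ∑ j ∈ (range N).erase i, (πij N i j - π N i * π N j) ^ 2 ≤
        C * (N : ℝ) ^ (-(2 * κ)))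
    -- D5: limsup N⁻¹ ∑ y_i² < ∞
    (hy : ∃ B : ℝ, ∀ᶠ N : ℕ in atTop, (N : ℝ)⁻¹ * ∑ i ∈ range N, (y N i) ^ 2 ≤ B) :
    Tendsto (fun N : ℕ => ∫ ω,
        ((N : ℝ)⁻¹ * ∑ i ∈ range N, y N i * (if i ∈ s N ω then 1 else 0) / π N i -
          (N : ℝ)⁻¹ * ∑ i ∈ range N, y N i) ^ 2 ∂μ)
      atTop (nhds 0) := by
  obtain ⟨C0, hC0⟩ := hΔ
  obtain ⟨B0, hB0⟩ := hy
  set B : ℝ := max B0 0 with hBdef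
  set C : ℝ := max C0 0 with hCdef
  have hB : (0:ℝ) ≤ B := le_max_right _ _
  have hC : (0:ℝ) ≤ C := le_max_right _ _
  -- the exact value of the integral
  have int_eq : ∀ N : ℕ, (∫ ω,
        ((N : ℝ)⁻¹ * ∑ i ∈ range N, y N i * (if i ∈ s N ω then 1 else 0) / π N i -
          (N : ℝ)⁻¹ * ∑ i ∈ range N, y N i) ^ 2 ∂μ)
      = ∑ i ∈ range N, ∑ j ∈ range N,
          ((N : ℝ)⁻¹ * (y N i / π N i)) * ((N : ℝ)⁻¹ * (y N j / π N j)) *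
            (πij N i j - π N i * π N j) := by
    intro N
    set c : ℕ → ℝ := fun i => (N : ℝ)⁻¹ * (y N i / π N i) with hc
    have hπpos : ∀ i ∈ range N, 0 < π N i :=
      fun i hi => lt_of_lt_of_le (hπstar_pos N) (hπ_lb N i hi)
    have hpt : ∀ ω : Ω,
        ((N : ℝ)⁻¹ * ∑ i ∈ range N, y N i * (if i ∈ s N ω then 1 else 0) / π N i -
          (N : ℝ)⁻¹ * ∑ i ∈ range N, y N i)
        = ∑ i ∈ range N,
            c i * ((if i ∈ s N ω then (1:ℝ) else 0) - (μ {ω | i ∈ s N ω}).toReal) := by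
      intro ω
      rw [Finset.mul_sum, Finset.mul_sum, ← Finset.sum_sub_distrib]
      refine Finset.sum_congr rfl fun i hi => ?_
      rw [mul_sub, ← hπ N i]
      congr 1
      · rw [hc]; ring
      · rw [hc]
        have : y N i / π N i * π N i = y N i := div_mul_cancel₀ _ (hπpos i hi).ne'
        rw [mul_assoc, this]
    calc (∫ ω,
        ((N : ℝ)⁻¹ * ∑ i ∈ range N, y N i * (if i ∈ s N ω then 1 else 0) / π N i -
          (N : ℝ)⁻¹ * ∑ i ∈ range N, y N i) ^ 2 ∂μ)
        = ∫ ω, (∑ i ∈ range N,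
            c i * ((if i ∈ s N ω then (1:ℝ) else 0) - (μ {ω | i ∈ s N ω}).toReal)) ^ 2 ∂μ := by
          congr 1; funext ω; rw [hpt ω]
      _ = ∑ i ∈ range N, ∑ j ∈ range N, c i * c j *
            ((μ {ω | i ∈ s N ω ∧ j ∈ s N ω}).toReal -
              (μ {ω | i ∈ s N ω}).toReal * (μ {ω | j ∈ s N ω}).toReal) :=
          key_integral μ (s N) (hmeas N) N c
      _ = ∑ i ∈ range N, ∑ j ∈ range N, c i * c j * (πij N i j - π N i * π N j) := by
          refine Finset.sum_congr rfl fun i _ => Finset.sum_congr rfl fun j _ => ?_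
          rw [hπ N i, hπ N j, hπij N i j]
  -- eventual upper bound
  have upper : ∀ᶠ N : ℕ in atTop, (∫ ω,
        ((N : ℝ)⁻¹ * ∑ i ∈ range N, y N i * (if i ∈ s N ω then 1 else 0) / π N i -
          (N : ℝ)⁻¹ * ∑ i ∈ range N, y N i) ^ 2 ∂μ)
      ≤ B / ((N : ℝ) * πstar N)
        + B * Real.sqrt C / ((N : ℝ) ^ ((1 : ℝ) / 2 + κ) * πstar N ^ 2) := by
    filter_upwards [hC0, hB0, eventually_ge_atTop 1] with N hCN hBN hN1
    rw [int_eq N]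
    have hN0 : (0 : ℝ) < (N : ℝ) := by exact_mod_cast hN1
    have hπii : ∀ i : ℕ, πij N i i = π N i := by
      intro i
      rw [hπij N i i, hπ N i]
      have hset : {ω : Ω | i ∈ s N ω ∧ i ∈ s N ω} = {ω : Ω | i ∈ s N ω} := by
        ext ω; simp
      rw [hset]
    have hπ01 : ∀ i : ℕ, 0 ≤ π N i ∧ π N i ≤ 1 := by
      intro i
      rw [hπ N i]
      refine ⟨ENNReal.toReal_nonneg, ?_⟩
      simpa using ENNReal.toReal_mono ENNReal.one_ne_top prob_le_one
    refine bound_sum N hN1 κ (y N) (π N) (fun i j => πij N i j - π N i * π N j)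
      (πstar N) B C (hπstar_pos N) hB hC (hπ_lb N) ?_ ?_ ?_ ?_
    · intro i _
      obtain ⟨h0, h1⟩ := hπ01 i
      simp only [hπii i]
      nlinarith
    · intro i _
      simp only [hπii i]
      nlinarith [mul_self_nonneg (π N i)]
    · intro i hi
      exact (hCN i hi).trans (mul_le_mul_of_nonneg_right (le_max_left _ _)
        (Real.rpow_nonneg hN0.le _))
    · have h1 : (N : ℝ)⁻¹ * ∑ i ∈ range N, y N i ^ 2 ≤ B := hBN.trans (le_max_left _ _)
      calc ∑ i ∈ range N, y N i ^ 2
          = (N : ℝ) * ((N : ℝ)⁻¹ * ∑ i ∈ range N, y N i ^ 2) := by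
            field_simp
        _ ≤ (N : ℝ) * B := mul_le_mul_of_nonneg_left h1 hN0.le
        _ = B * N := mul_comm _ _
  -- squeeze
  have lower : ∀ N : ℕ, (0:ℝ) ≤ ∫ ω,
        ((N : ℝ)⁻¹ * ∑ i ∈ range N, y N i * (if i ∈ s N ω then 1 else 0) / π N i -
          (N : ℝ)⁻¹ * ∑ i ∈ range N, y N i) ^ 2 ∂μ :=
    fun N => integral_nonneg fun ω => sq_nonneg _
  have t1 : Tendsto (fun N : ℕ => B / ((N : ℝ) * πstar N)) atTop (nhds 0) :=
    Tendsto.div_atTop tendsto_const_nhds hNπstar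
  have t2 : Tendsto (fun N : ℕ => B * Real.sqrt C /
      ((N : ℝ) ^ ((1 : ℝ) / 2 + κ) * πstar N ^ 2)) atTop (nhds 0) :=
    Tendsto.div_atTop tendsto_const_nhds hrate
  have tg : Tendsto (fun N : ℕ => B / ((N : ℝ) * πstar N)
      + B * Real.sqrt C / ((N : ℝ) ^ ((1 : ℝ) / 2 + κ) * πstar N ^ 2)) atTop (nhds 0) := by
    simpa using t1.add t2
  exact tendsto_of_tendsto_of_tendsto_of_le_of_le' tendsto_const_nhds tg
    (Eventually.of_forall lower) upper
end

section
/- In the setting of the previous context, with B_h, B_k disjoint or arbitrary measurable sets, define a_h = N^{−1}∑_{i=1}^N 1_{X_i∈B_h} − n^{−1}∑_{i∈s} 1_{X_i∈B_h} and b_k = N^{−1}∑_{i=1}^N y_i 1_{X_i∈B_k} − n^{−1}∑_{i∈s} y_i 1_{X_i∈B_k}. Then Cov(a_h, b_k) = (1/n)(1 − n/N)(E[y 1_{X∈B_h}] 1_{h=k} − Pr(X∈B_h) E[y 1_{X∈B_k}]). -/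
open MeasureTheory ProbabilityTheory Finset
open scoped Classical ENNReal

lemma aux_restrict_map {Ω β : Type*} [MeasurableSpace Ω] [MeasurableSpace β]
    (μ : Measure Ω) (Z : Ω → β) (hZ : Measurable Z) (E : Set Ω) (hE : MeasurableSet E)
    (hind : ∀ A : Set β, MeasurableSet A → μ (E ∩ Z ⁻¹' A) = μ E * μ (Z ⁻¹' A))
    (G : β → ℝ) (hG : Measurable G) :
    ∫ ω in E, G (Z ω) ∂μ = (μ E).toReal * ∫ ω, G (Z ω) ∂μ := by
  have hmap : (μ.restrict E).map Z = μ E • μ.map Z := by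
    ext A hA
    rw [Measure.map_apply hZ hA, Measure.restrict_apply (hZ hA), Set.inter_comm,
      hind A hA, Measure.smul_apply, Measure.map_apply hZ hA, smul_eq_mul]
  calc ∫ ω in E, G (Z ω) ∂μ = ∫ x, G x ∂((μ.restrict E).map Z) :=
        (integral_map hZ.aemeasurable hG.aestronglyMeasurable).symm
    _ = (μ E).toReal * ∫ x, G x ∂(μ.map Z) := by
        rw [hmap, integral_smul_measure, smul_eq_mul]
    _ = (μ E).toReal * ∫ ω, G (Z ω) ∂μ := by
        rw [integral_map hZ.aemeasurable hG.aestronglyMeasurable]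

/-- Superpopulation + SRSWOR covariance computation: with i.i.d. pairs
`(X_i, y_i)`, `E[y²] < ∞`, and a simple random sample `s` of size `n` drawn
independently of the data, the covariance between the population-minus-sample
proportion `a_h` of `{X ∈ B_h}` and the population-minus-sample mean `b_k` of
`y 1_{X ∈ B_k}` equals
`(1/n)(1 - n/N)(E[y 1_{X∈B_h}] 1_{B_h = B_k} - Pr(X∈B_h) E[y 1_{X∈B_k}])`. -/
theorem stmt_8 {Ω α : Type*} [MeasurableSpace Ω] [MeasurableSpace α]
    (μ : Measure Ω) [IsProbabilityMeasure μ]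
    (N n : ℕ) (hn : 1 ≤ n) (hnN : n ≤ N)
    (X : ℕ → Ω → α) (y : ℕ → Ω → ℝ)
    (hZmeas : ∀ i, Measurable (fun ω => (X i ω, y i ω)))
    (hiid : iIndepFun
      (fun i ω => (X i ω, y i ω)) μ)
    (hident : ∀ i, Measure.map (fun ω => (X i ω, y i ω)) μ =
      Measure.map (fun ω => (X 0 ω, y 0 ω)) μ)
    (hy2 : MemLp (y 0) 2 μ)
    (s : Ω → Finset ℕ) (hsmeas : ∀ t : Finset ℕ, MeasurableSet {ω | s ω = t})
    (hunif : ∀ t : Finset ℕ, t ⊆ range N → t.card = n →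
      μ {ω | s ω = t} = ((N.choose n : ℝ≥0∞))⁻¹)
    (hvalid : ∀ ω, s ω ⊆ range N ∧ (s ω).card = n)
    (hindep : ∀ (t : Finset ℕ) (A : Set (ℕ → α × ℝ)), MeasurableSet A →
      μ ({ω | s ω = t} ∩ {ω | (fun i => (X i ω, y i ω)) ∈ A}) =
        μ {ω | s ω = t} * μ {ω | (fun i => (X i ω, y i ω)) ∈ A})
    (Bh Bk : Set α) (hBh : MeasurableSet Bh) (hBk : MeasurableSet Bk)
    (hdisj : Bh = Bk ∨ Disjoint Bh Bk)
    (a b : Ω → ℝ)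
    (ha : ∀ ω, a ω =
      (N : ℝ)⁻¹ * ∑ i ∈ range N, (if X i ω ∈ Bh then (1 : ℝ) else 0) -
        (n : ℝ)⁻¹ * ∑ i ∈ s ω, (if X i ω ∈ Bh then (1 : ℝ) else 0))
    (hb : ∀ ω, b ω =
      (N : ℝ)⁻¹ * ∑ i ∈ range N, y i ω * (if X i ω ∈ Bk then (1 : ℝ) else 0) -
        (n : ℝ)⁻¹ * ∑ i ∈ s ω, y i ω * (if X i ω ∈ Bk then (1 : ℝ) else 0)) :
    (∫ ω, a ω * b ω ∂μ) - (∫ ω, a ω ∂μ) * (∫ ω, b ω ∂μ) =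
      (1 / n) * (1 - (n : ℝ) / N) *
        ((if Bh = Bk then ∫ ω, y 0 ω * (if X 0 ω ∈ Bh then (1 : ℝ) else 0) ∂μ
            else 0) -
          (μ {ω | X 0 ω ∈ Bh}).toReal *
            ∫ ω, y 0 ω * (if X 0 ω ∈ Bk then (1 : ℝ) else 0) ∂μ) := by
  classical
  have hn0 : (n : ℝ) ≠ 0 := Nat.cast_ne_zero.mpr (by omega)
  have hN0 : (N : ℝ) ≠ 0 := Nat.cast_ne_zero.mpr (by omega)
  -- basic functions
  set Z : Ω → ℕ → α × ℝ := fun ω i => (X i ω, y i ω) with hZdef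
  have hZ : Measurable Z := measurable_pi_lambda _ hZmeas
  set f : α × ℝ → ℝ := fun z => if z.1 ∈ Bh then 1 else 0 with hfdef
  set g : α × ℝ → ℝ := fun z => z.2 * (if z.1 ∈ Bk then 1 else 0) with hgdef
  have hf : Measurable f := by
    apply Measurable.ite (measurable_fst hBh) measurable_const measurable_const
  have hg : Measurable g := by
    exact measurable_snd.mul
      (Measurable.ite (measurable_fst hBk) measurable_const measurable_const)
  -- moments
  set p : ℝ := (μ {ω | X 0 ω ∈ Bh}).toReal with hpdef
  set m : ℝ := ∫ ω, y 0 ω * (if X 0 ω ∈ Bk then (1 : ℝ) else 0) ∂μ with hmdef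
  set c : ℝ := ∫ ω, f (X 0 ω, y 0 ω) * g (X 0 ω, y 0 ω) ∂μ with hcdef
  -- identical distribution: integrals don't depend on i
  have hint1 : ∀ (F : α × ℝ → ℝ), Measurable F → ∀ i,
      (∫ ω, F (X i ω, y i ω) ∂μ) = ∫ ω, F (X 0 ω, y 0 ω) ∂μ := by
    intro F hF i
    rw [← integral_map (hZmeas i).aemeasurable hF.aestronglyMeasurable, hident i,
      integral_map (hZmeas 0).aemeasurable hF.aestronglyMeasurable]
  -- integrability
  have hgZ0 : MemLp (fun ω => g (X 0 ω, y 0 ω)) 2 μ := by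
    apply MemLp.of_le hy2 ((hg.comp (hZmeas 0)).aestronglyMeasurable)
    apply Filter.Eventually.of_forall
    intro ω
    show ‖y 0 ω * (if X 0 ω ∈ Bk then (1:ℝ) else 0)‖ ≤ ‖y 0 ω‖
    rw [norm_mul]
    split <;> simp
  have hgI : ∀ i, Integrable (fun ω => g (X i ω, y i ω)) μ := by
    intro i
    have h0 : Integrable (fun ω => g (X 0 ω, y 0 ω)) μ :=
      hgZ0.integrable (by norm_num)
    have h1 : Integrable g (Measure.map (fun ω => (X 0 ω, y 0 ω)) μ) :=
      (integrable_map_measure hg.aestronglyMeasurable (hZmeas 0).aemeasurable).mpr h0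
    rw [← hident i] at h1
    exact (integrable_map_measure hg.aestronglyMeasurable (hZmeas i).aemeasurable).mp h1
  have hfbd : ∀ z, ‖f z‖ ≤ 1 := by
    intro z; simp only [hfdef, Real.norm_eq_abs]; split <;> norm_num
  have hfI : ∀ i, Integrable (fun ω => f (X i ω, y i ω)) μ := by
    intro i
    apply Integrable.mono' (integrable_const (1 : ℝ))
      ((hf.comp (hZmeas i)).aestronglyMeasurable)
    exact Filter.Eventually.of_forall fun ω => hfbd _
  have hfgI : ∀ i j, Integrable (fun ω => f (X i ω, y i ω) * g (X j ω, y j ω)) μ := by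
    intro i j
    exact Integrable.bdd_mul (hgI j) ((hf.comp (hZmeas i)).aestronglyMeasurable)
      (Filter.Eventually.of_forall fun ω => hfbd _)
  -- integral values
  have hEu : ∀ i, (∫ ω, f (X i ω, y i ω) ∂μ) = p := by
    intro i
    rw [hint1 f hf i, hpdef]
    have : (fun ω => f (X 0 ω, y 0 ω)) =
        Set.indicator {ω | X 0 ω ∈ Bh} (fun _ => (1 : ℝ)) := by
      funext ω; simp [hfdef, Set.indicator_apply]
    rw [this, integral_indicator_const]
    · simp [Measure.real]
    · exact (measurable_fst.comp (hZmeas 0)) hBh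
  have hEv : ∀ i, (∫ ω, g (X i ω, y i ω) ∂μ) = m := hint1 g hg
  have hEc : ∀ i, (∫ ω, f (X i ω, y i ω) * g (X i ω, y i ω) ∂μ) = c :=
    hint1 (fun z => f z * g z) (hf.mul hg)
  have hEne : ∀ i j, i ≠ j →
      (∫ ω, f (X i ω, y i ω) * g (X j ω, y j ω) ∂μ) = p * m := by
    intro i j hij
    have hind : IndepFun (fun ω => f (X i ω, y i ω)) (fun ω => g (X j ω, y j ω)) μ :=
      IndepFun.comp (hiid.indepFun hij) hf hg
    have := IndepFun.integral_mul_eq_mul_integral hind (hfI i).aestronglyMeasurable (hgI j).aestronglyMeasurable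
    rw [← hEu i, ← hEv j, ← this]
    rfl
  -- coefficients
  set w : Finset ℕ → ℕ → ℝ := fun t i => (N:ℝ)⁻¹ - (n:ℝ)⁻¹ * (if i ∈ t then 1 else 0) with hwdef
  have hsum_ite : ∀ (t : Finset ℕ), t ⊆ range N → ∀ (φ : ℕ → ℝ),
      ∑ i ∈ range N, (if i ∈ t then (1:ℝ) else 0) * φ i = ∑ i ∈ t, φ i := by
    intro t ht φ
    have h1 : ∀ i ∈ range N, (if i ∈ t then (1:ℝ) else 0) * φ i
        = if i ∈ t then φ i else 0 := by intro i _; split <;> ring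
    rw [Finset.sum_congr rfl h1, Finset.sum_ite_mem, Finset.inter_eq_right.mpr ht]
  have hAform : ∀ (t : Finset ℕ), t ⊆ range N → ∀ (φ : ℕ → ℝ),
      ∑ i ∈ range N, w t i * φ i
        = (N:ℝ)⁻¹ * ∑ i ∈ range N, φ i - (n:ℝ)⁻¹ * ∑ i ∈ t, φ i := by
    intro t ht φ
    rw [← hsum_ite t ht φ, Finset.mul_sum, Finset.mul_sum, ← Finset.sum_sub_distrib]
    exact Finset.sum_congr rfl fun i _ => by simp only [hwdef]; ring
  have hwcard : ∀ t : Finset ℕ, t ⊆ range N →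
      ∑ i ∈ range N, (if i ∈ t then (1:ℝ) else 0) = (t.card : ℝ) := by
    intro t ht
    rw [Finset.sum_ite_mem, Finset.inter_eq_right.mpr ht, Finset.sum_const,
      nsmul_eq_mul, mul_one]
  have hw1 : ∀ t : Finset ℕ, t ⊆ range N → t.card = n → ∑ i ∈ range N, w t i = 0 := by
    intro t ht hc'
    simp only [hwdef, Finset.sum_sub_distrib, ← Finset.mul_sum, hwcard t ht, hc',
      Finset.sum_const, Finset.card_range, nsmul_eq_mul, mul_one]
    field_simp
    ring
  have hw2 : ∀ t : Finset ℕ, t ⊆ range N → t.card = n →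
      ∑ i ∈ range N, w t i * w t i = (n:ℝ)⁻¹ - (N:ℝ)⁻¹ := by
    intro t ht hc'
    have expand : ∀ i, w t i * w t i = (N:ℝ)⁻¹ * (N:ℝ)⁻¹
        - (2 * ((N:ℝ)⁻¹ * (n:ℝ)⁻¹) - (n:ℝ)⁻¹ * (n:ℝ)⁻¹) * (if i ∈ t then (1:ℝ) else 0) := by
      intro i; simp only [hwdef]; split <;> ring
    rw [Finset.sum_congr rfl (fun i _ => expand i), Finset.sum_sub_distrib,
      show (∑ x ∈ range N, (2 * ((N:ℝ)⁻¹ * (n:ℝ)⁻¹) - (n:ℝ)⁻¹ * (n:ℝ)⁻¹)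
            * if x ∈ t then (1:ℝ) else 0)
          = (2 * ((N:ℝ)⁻¹ * (n:ℝ)⁻¹) - (n:ℝ)⁻¹ * (n:ℝ)⁻¹)
            * ∑ x ∈ range N, if x ∈ t then (1:ℝ) else 0
        from (Finset.mul_sum _ _ _).symm,
      hwcard t ht, hc', Finset.sum_const, Finset.card_range, nsmul_eq_mul]
    field_simp
    ring
  -- the partition by the value of s
  set T : Finset (Finset ℕ) := Finset.powersetCard n (range N) with hTdef
  have hTmem : ∀ ω, s ω ∈ T := fun ω => Finset.mem_powersetCard.mpr (hvalid ω)
  have hch : (N.choose n : ℝ) ≠ 0 := Nat.cast_ne_zero.mpr (Nat.choose_pos hnN).ne'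
  have hμtR : ∀ t ∈ T, (μ {ω | s ω = t}).toReal = ((N.choose n : ℝ))⁻¹ := by
    intro t ht
    obtain ⟨h1, h2⟩ := Finset.mem_powersetCard.mp ht
    rw [hunif t h1 h2, ENNReal.toReal_inv]
    simp
  have hcover : (⋃ t ∈ T, {ω | s ω = t}) = Set.univ := by
    ext ω
    simp only [Set.mem_iUnion, Set.mem_univ, iff_true]
    exact ⟨s ω, hTmem ω, rfl⟩
  have hpair : (↑T : Set (Finset ℕ)).Pairwise
      (Function.onFun Disjoint (fun t => {ω | s ω = t})) := by
    intro t1 _ t2 _ hne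
    apply Set.disjoint_left.mpr
    intro ω h1 h2
    exact hne ((h1 : s ω = t1).symm.trans (h2 : s ω = t2))
  have hsplit : ∀ (h : Ω → ℝ), Integrable h μ →
      ∫ ω, h ω ∂μ = ∑ t ∈ T, ∫ ω in {ω | s ω = t}, h ω ∂μ := by
    intro h hh
    rw [← setIntegral_univ (μ := μ) (f := h), ← hcover,
      integral_biUnion_finset T (fun t _ => hsmeas t) hpair (fun t _ => hh.integrableOn)]
  -- data-only versions of a and b on each event
  set GA : Finset ℕ → (ℕ → α × ℝ) → ℝ := fun t x => ∑ i ∈ range N, w t i * f (x i)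
    with hGAdef
  set GB : Finset ℕ → (ℕ → α × ℝ) → ℝ := fun t x => ∑ i ∈ range N, w t i * g (x i)
    with hGBdef
  have hGAm : ∀ t, Measurable (GA t) := fun t =>
    Finset.measurable_sum _ fun i _ => (hf.comp (measurable_pi_apply i)).const_mul _
  have hGBm : ∀ t, Measurable (GB t) := fun t =>
    Finset.measurable_sum _ fun i _ => (hg.comp (measurable_pi_apply i)).const_mul _
  have haA : ∀ t ∈ T, ∀ ω, s ω = t → a ω = GA t (Z ω) := by
    intro t ht ω hst
    obtain ⟨hsub, -⟩ := Finset.mem_powersetCard.mp ht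
    rw [ha ω, hst]
    exact (hAform t hsub (fun i => if X i ω ∈ Bh then (1:ℝ) else 0)).symm
  have hbB : ∀ t ∈ T, ∀ ω, s ω = t → b ω = GB t (Z ω) := by
    intro t ht ω hst
    obtain ⟨hsub, -⟩ := Finset.mem_powersetCard.mp ht
    rw [hb ω, hst]
    exact (hAform t hsub (fun i => y i ω * if X i ω ∈ Bk then (1:ℝ) else 0)).symm
  -- independence of sample and data
  have hkey : ∀ (t : Finset ℕ) (G : (ℕ → α × ℝ) → ℝ), Measurable G →
      ∫ ω in {ω | s ω = t}, G (Z ω) ∂μ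
        = (μ {ω | s ω = t}).toReal * ∫ ω, G (Z ω) ∂μ := by
    intro t G hG
    exact aux_restrict_map μ Z hZ _ (hsmeas t) (fun A hA => hindep t A hA) G hG
  -- integrability of the data-only functions
  have hIA : ∀ t, Integrable (fun ω => GA t (Z ω)) μ := fun t =>
    integrable_finset_sum _ fun i _ => (hfI i).const_mul _
  have hprod : ∀ t ω, GA t (Z ω) * GB t (Z ω)
      = ∑ i ∈ range N, ∑ j ∈ range N,
          (w t i * w t j) * (f (X i ω, y i ω) * g (X j ω, y j ω)) := by
    intro t ω
    rw [hGAdef, hGBdef, Finset.sum_mul_sum]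
    exact Finset.sum_congr rfl fun i _ => Finset.sum_congr rfl fun j _ => by ring
  have hIAB : ∀ t, Integrable (fun ω => GA t (Z ω) * GB t (Z ω)) μ := by
    intro t
    rw [show (fun ω => GA t (Z ω) * GB t (Z ω)) = fun ω => ∑ i ∈ range N, ∑ j ∈ range N,
        (w t i * w t j) * (f (X i ω, y i ω) * g (X j ω, y j ω)) from funext (hprod t)]
    exact integrable_finset_sum _ fun i _ =>
      integrable_finset_sum _ fun j _ => (hfgI i j).const_mul _
  -- expectations of the data-only functions
  have hEA : ∀ t ∈ T, (∫ ω, GA t (Z ω) ∂μ) = 0 := by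
    intro t ht
    obtain ⟨hsub, hc'⟩ := Finset.mem_powersetCard.mp ht
    rw [show (fun ω => GA t (Z ω))
        = fun ω => ∑ i ∈ range N, w t i * f (X i ω, y i ω) from rfl,
      integral_finset_sum _ (fun i _ => (hfI i).const_mul _),
      Finset.sum_congr rfl fun i _ => by rw [integral_const_mul, hEu i],
      ← Finset.sum_mul, hw1 t hsub hc', zero_mul]
  have hEAB : ∀ t ∈ T, (∫ ω, GA t (Z ω) * GB t (Z ω) ∂μ)
      = ((n:ℝ)⁻¹ - (N:ℝ)⁻¹) * (c - p * m) := by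
    intro t ht
    obtain ⟨hsub, hc'⟩ := Finset.mem_powersetCard.mp ht
    have hz : ∑ j ∈ range N, w t j = 0 := hw1 t hsub hc'
    have e1 : (∫ ω, GA t (Z ω) * GB t (Z ω) ∂μ) = ∑ i ∈ range N, ∑ j ∈ range N,
        (w t i * w t j) * ∫ ω, f (X i ω, y i ω) * g (X j ω, y j ω) ∂μ := by
      rw [integral_congr_ae (Filter.Eventually.of_forall (hprod t)),
        integral_finset_sum _ (fun i _ =>
          integrable_finset_sum _ fun j _ => (hfgI i j).const_mul _)]
      refine Finset.sum_congr rfl fun i _ => ?_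
      rw [integral_finset_sum _ (fun j _ => (hfgI i j).const_mul _)]
      exact Finset.sum_congr rfl fun j _ => integral_const_mul _ _
    have e2 : ∀ i ∈ range N, ∀ j ∈ range N,
        (∫ ω, f (X i ω, y i ω) * g (X j ω, y j ω) ∂μ)
          = p * m + (if i = j then c - p * m else 0) := by
      intro i _ j _
      by_cases hij : i = j
      · subst hij; rw [hEc i, if_pos rfl]; ring
      · rw [hEne i j hij, if_neg hij]; ring
    have inner : ∀ i ∈ range N,
        ∑ j ∈ range N, (w t i * w t j) * (p * m + (if i = j then c - p * m else 0))
          = (w t i * w t i) * (c - p * m) := by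
      intro i hi
      have h1 : ∀ j, (w t i * w t j) * (p * m + (if i = j then c - p * m else 0))
          = (w t i * (p * m)) * w t j
            + (if i = j then (w t i * w t j) * (c - p * m) else 0) := by
        intro j; split <;> ring
      rw [Finset.sum_congr rfl fun j _ => h1 j, Finset.sum_add_distrib, ← Finset.mul_sum,
        hz, mul_zero, zero_add,
        Finset.sum_ite_eq (range N) i (fun j => (w t i * w t j) * (c - p * m)), if_pos hi]
    rw [e1,
      Finset.sum_congr rfl (fun i hi => Finset.sum_congr rfl fun j hj => by
        rw [e2 i hi j hj]),
      Finset.sum_congr rfl inner, ← Finset.sum_mul, hw2 t hsub hc']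
  -- integrability of a and a*b
  have hrepr : ∀ (F : Ω → ℝ) (G : Finset ℕ → Ω → ℝ),
      (∀ t ∈ T, ∀ ω, s ω = t → F ω = G t ω) →
      F = fun ω => ∑ t ∈ T, Set.indicator {ω' | s ω' = t} (G t) ω := by
    intro F G hFG
    funext ω
    rw [Finset.sum_eq_single_of_mem (s ω) (hTmem ω) ?h0]
    · rw [Set.indicator_of_mem (show ω ∈ {ω' | s ω' = s ω} from rfl)]
      exact hFG (s ω) (hTmem ω) ω rfl
    · intro t _ hne
      apply Set.indicator_of_notMem
      intro hmem
      exact hne ((show s ω = t from hmem).symm)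
  have haI : Integrable a μ := by
    rw [hrepr a (fun t ω => GA t (Z ω)) haA]
    exact integrable_finset_sum _ fun t _ => (hIA t).indicator (hsmeas t)
  have habI : Integrable (fun ω => a ω * b ω) μ := by
    rw [hrepr (fun ω => a ω * b ω) (fun t ω => GA t (Z ω) * GB t (Z ω))
      (fun t ht ω hst => by
        show a ω * b ω = GA t (Z ω) * GB t (Z ω)
        rw [haA t ht ω hst, hbB t ht ω hst])]
    exact integrable_finset_sum _ fun t _ => (hIAB t).indicator (hsmeas t)
  -- the two integrals
  have hIa : (∫ ω, a ω ∂μ) = 0 := by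
    rw [hsplit a haI]
    apply Finset.sum_eq_zero
    intro t ht
    calc ∫ ω in {ω | s ω = t}, a ω ∂μ
        = ∫ ω in {ω | s ω = t}, GA t (Z ω) ∂μ :=
          setIntegral_congr_fun (hsmeas t) (fun ω hω => haA t ht ω hω)
      _ = (μ {ω | s ω = t}).toReal * ∫ ω, GA t (Z ω) ∂μ := hkey t (GA t) (hGAm t)
      _ = 0 := by rw [hEA t ht, mul_zero]
  have hIab : (∫ ω, a ω * b ω ∂μ) = ((n:ℝ)⁻¹ - (N:ℝ)⁻¹) * (c - p * m) := by
    rw [hsplit _ habI]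
    have e : ∀ t ∈ T, ∫ ω in {ω | s ω = t}, a ω * b ω ∂μ
        = ((N.choose n : ℝ))⁻¹ * (((n:ℝ)⁻¹ - (N:ℝ)⁻¹) * (c - p * m)) := by
      intro t ht
      calc ∫ ω in {ω | s ω = t}, a ω * b ω ∂μ
          = ∫ ω in {ω | s ω = t}, GA t (Z ω) * GB t (Z ω) ∂μ :=
            setIntegral_congr_fun (hsmeas t)
              (fun ω hω => by rw [haA t ht ω hω, hbB t ht ω hω])
        _ = (μ {ω | s ω = t}).toReal * ∫ ω, GA t (Z ω) * GB t (Z ω) ∂μ :=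
            hkey t (fun x => GA t x * GB t x) ((hGAm t).mul (hGBm t))
        _ = ((N.choose n : ℝ))⁻¹ * (((n:ℝ)⁻¹ - (N:ℝ)⁻¹) * (c - p * m)) := by
            rw [hμtR t ht, hEAB t ht]
    rw [Finset.sum_congr rfl e, Finset.sum_const, hTdef, Finset.card_powersetCard,
      Finset.card_range, nsmul_eq_mul, ← mul_assoc, mul_inv_cancel₀ hch, one_mul]
  -- value of c
  have hcval : c = if Bh = Bk then
      (∫ ω, y 0 ω * (if X 0 ω ∈ Bh then (1:ℝ) else 0) ∂μ) else 0 := by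
    by_cases he : Bh = Bk
    · rw [if_pos he, hcdef]
      apply integral_congr_ae
      apply Filter.Eventually.of_forall
      intro ω
      show (if X 0 ω ∈ Bh then (1:ℝ) else 0) * (y 0 ω * (if X 0 ω ∈ Bk then (1:ℝ) else 0))
        = y 0 ω * (if X 0 ω ∈ Bh then (1:ℝ) else 0)
      rw [← he]
      split <;> ring
    · rw [if_neg he, hcdef]
      have hd : Disjoint Bh Bk := hdisj.resolve_left he
      have hzero : ∀ ω, f (X 0 ω, y 0 ω) * g (X 0 ω, y 0 ω) = 0 := by
        intro ω
        show (if X 0 ω ∈ Bh then (1:ℝ) else 0) * (y 0 ω * (if X 0 ω ∈ Bk then (1:ℝ) else 0)) = 0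
        by_cases h1 : X 0 ω ∈ Bh
        · rw [if_pos h1, if_neg (Set.disjoint_left.mp hd h1)]; ring
        · rw [if_neg h1]; ring
      simp only [hzero, integral_zero]
  -- conclusion
  rw [hIab, hIa, zero_mul, sub_zero, ← hcval]
  have hcoef : (1 / (n:ℝ)) * (1 - (n:ℝ) / N) = (n:ℝ)⁻¹ - (N:ℝ)⁻¹ := by
    field_simp
    try ring
  rw [hcoef]
end
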